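/- Let p ≥ 5 be a prime and let G = ⟨a,b,c,d | [c,b], [d,a], [d,b], [d,c]⟩ be the class-2 exponent-p group on four generators with relations [c,b] = [d,a] = [d,b] = [d,c] = 1 (group 6.4.1, of order p^6). Then the number of conjugacy classes of G is 2p^4 − p^2, and the automorphism group of G has order (p − 1)^2(p^2 − 1)(p^2 − p)p^13. -/

import Mathlib

/-- The commutator `u⁻¹v⁻¹uv`. -/
def fgComm {α : Type} (u v : FreeGroup α) : FreeGroup α := u⁻¹ * v⁻¹ * u * v

/-- The relator set for the largest class-2 exponent-`p` group on `n` generators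
satisfying the extra relations `R`: we add all `p`-th powers and all triple commutators. -/
def classTwoRels (p n : ℕ) (R : Set (FreeGroup (Fin n))) : Set (FreeGroup (Fin n)) :=
  R ∪ (Set.range fun w : FreeGroup (Fin n) => w ^ p) ∪
    {x | ∃ u v w : FreeGroup (Fin n), x = fgComm (fgComm u v) w}

/-- The largest class-2 exponent-`p` group on `n` generators satisfying the relations `R`. -/
def ClassTwoGroup (p n : ℕ) (R : Set (FreeGroup (Fin n))) : Type :=
  PresentedGroup (classTwoRels p n R)

instance (p n : ℕ) (R : Set (FreeGroup (Fin n))) : Group (ClassTwoGroup p n R) := by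
  unfold ClassTwoGroup; infer_instance

/-- `H` is a class-3 descendant of `G` of order `p^9` with exponent `p`. -/
def IsClass3Descendant (p : ℕ) (G : Type) [Group G] (H : Type) [Group H] : Prop :=
  Nat.card H = p ^ 9 ∧ Monoid.exponent H = p ∧
    (⊤ : Subgroup H).lowerCentralSeries 3 = ⊥ ∧ (⊤ : Subgroup H).lowerCentralSeries 2 ≠ ⊥ ∧
    Nonempty ((H ⧸ (⊤ : Subgroup H).lowerCentralSeries 2) ≃* G)

/-- The multiplication underlying a group structure. -/
def mulOfGroup {α : Type} (g : Group α) : Mul α := by letI := g; infer_instance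

/-- `P` has exactly `k` isomorphism classes of groups satisfying it. -/
def IsIsoClassCount (P : (H : Type) → Group H → Prop) (k : ℕ) : Prop :=
  ∃ (H : Fin k → Type) (inst : (i : Fin k) → Group (H i)),
    (∀ i, P (H i) (inst i)) ∧
    (∀ i j : Fin k, i ≠ j →
      ¬ Nonempty (@MulEquiv (H i) (H j) (mulOfGroup (inst i)) (mulOfGroup (inst j)))) ∧
    (∀ (K : Type) (instK : Group K), P K instK →
      ∃ i, Nonempty (@MulEquiv K (H i) (mulOfGroup instK) (mulOfGroup (inst i))))

/-- `G` has exactly `k` class-3 descendants of order `p^9` with exponent `p`,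
up to isomorphism. -/
def DescendantCount (p : ℕ) (G : Type) [Group G] (k : ℕ) : Prop :=
  IsIsoClassCount (fun H inst => @IsClass3Descendant p G _ H inst) k


def gc {G : Type*} [Group G] (x y : G) : G := x⁻¹ * y⁻¹ * x * y

section ClassTwo
variable {G : Type*} [Group G]

lemma gc_mul_eq (x y : G) : y * x = x * y * gc y x := by unfold gc; group

lemma gc_inv (x y : G) : (gc x y)⁻¹ = gc y x := by unfold gc; group

lemma gc_one_left (y : G) : gc 1 y = 1 := by unfold gc; group

lemma gc_one_right (x : G) : gc x 1 = 1 := by unfold gc; group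

lemma commute_of_gc_eq_one {x y : G} (h : gc x y = 1) : Commute x y := by
  show x * y = y * x
  rw [gc_mul_eq y x, h, mul_one]

lemma map_gc {F H : Type*} [Group H] [FunLike F G H] [MonoidHomClass F G H]
    (f : F) (x y : G) :
    f (gc x y) = gc (f x) (f y) := by
  unfold gc; simp

lemma fgComm_eq_gc {α : Type} (u v : FreeGroup α) : fgComm u v = gc u v := rfl

variable (hcen : ∀ x y z : G, gc (gc x y) z = 1)

include hcen in
lemma central_gc (x y z : G) : Commute (gc x y) z :=
  commute_of_gc_eq_one (hcen x y z)

include hcen in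
lemma gc_mul_left (x y z : G) : gc (x*y) z = gc x z * gc y z := by
  have hq : ∀ w : G, gc x z * w = w * gc x z := fun w => (central_gc hcen x z w).eq
  have h1 : x⁻¹ * z⁻¹ * x = gc x z * z⁻¹ := by unfold gc; group
  calc gc (x*y) z = y⁻¹ * (x⁻¹ * z⁻¹ * x) * (y * z) := by unfold gc; group
    _ = y⁻¹ * (gc x z * z⁻¹) * (y * z) := by rw [h1]
    _ = y⁻¹ * gc x z * (z⁻¹ * y * z) := by group
    _ = gc x z * y⁻¹ * (z⁻¹ * y * z) := by rw [← hq y⁻¹]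
    _ = gc x z * gc y z := by unfold gc; group

include hcen in
lemma gc_mul_right (x y z : G) : gc x (y*z) = gc x y * gc x z := by
  have hq : gc x y * z = z * gc x y := (central_gc hcen x y z).eq
  have h1 : y⁻¹ * x * y = x * gc x y := by unfold gc; group
  have h2 : gc x y * gc x z = gc x z * gc x y := (central_gc hcen x y (gc x z)).eq
  calc gc x (y*z) = x⁻¹ * z⁻¹ * (y⁻¹ * x * y) * z := by unfold gc; group
    _ = x⁻¹ * z⁻¹ * (x * gc x y) * z := by rw [h1]
    _ = (x⁻¹ * z⁻¹ * x) * (gc x y * z) := by group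
    _ = (x⁻¹ * z⁻¹ * x) * (z * gc x y) := by rw [hq]
    _ = gc x z * gc x y := by unfold gc; group
    _ = gc x y * gc x z := h2.symm

include hcen in
lemma gc_pow_left (x y : G) (n : ℕ) : gc (x^n) y = (gc x y)^n := by
  induction n with
  | zero => simp [gc_one_left]
  | succ n ih => rw [pow_succ, gc_mul_left hcen, ih, pow_succ]

include hcen in
lemma gc_pow_right (x y : G) (n : ℕ) : gc x (y^n) = (gc x y)^n := by
  induction n with
  | zero => simp [gc_one_right]
  | succ n ih => rw [pow_succ, gc_mul_right hcen, ih, pow_succ]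

include hcen in
lemma swap_pow (x y : G) (m n : ℕ) :
    y^n * x^m = x^m * y^n * (gc y x)^(n*m) := by
  rw [gc_mul_eq (x^m) (y^n), gc_pow_left hcen, gc_pow_right hcen, ← pow_mul, Nat.mul_comm m n]

end ClassTwo



/-- Concrete model of the group: coordinates (a,b,c,d,e,f) over ZMod p. -/
def Md (p : ℕ) : Type := ZMod p × ZMod p × ZMod p × ZMod p × ZMod p × ZMod p

namespace Md
variable {p : ℕ}

def A (x : Md p) : ZMod p := x.1
def B (x : Md p) : ZMod p := x.2.1
def C (x : Md p) : ZMod p := x.2.2.1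
def D (x : Md p) : ZMod p := x.2.2.2.1
def E (x : Md p) : ZMod p := x.2.2.2.2.1
def F (x : Md p) : ZMod p := x.2.2.2.2.2

def mk' (a b c d e f : ZMod p) : Md p := (a,b,c,d,e,f)

@[simp] lemma A_mk (a b c d e f : ZMod p) : (mk' a b c d e f).A = a := rfl
@[simp] lemma B_mk (a b c d e f : ZMod p) : (mk' a b c d e f).B = b := rfl
@[simp] lemma C_mk (a b c d e f : ZMod p) : (mk' a b c d e f).C = c := rfl
@[simp] lemma D_mk (a b c d e f : ZMod p) : (mk' a b c d e f).D = d := rfl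
@[simp] lemma E_mk (a b c d e f : ZMod p) : (mk' a b c d e f).E = e := rfl
@[simp] lemma F_mk (a b c d e f : ZMod p) : (mk' a b c d e f).F = f := rfl

@[ext] lemma ext {x y : Md p} (h1 : x.A = y.A) (h2 : x.B = y.B) (h3 : x.C = y.C)
    (h4 : x.D = y.D) (h5 : x.E = y.E) (h6 : x.F = y.F) : x = y := by
  obtain ⟨a,b,c,d,e,f⟩ := x; obtain ⟨a',b',c',d',e',f'⟩ := y
  exact Prod.ext h1 (Prod.ext h2 (Prod.ext h3 (Prod.ext h4 (Prod.ext h5 h6))))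

instance : Mul (Md p) :=
  ⟨fun x y => mk' (x.A+y.A) (x.B+y.B) (x.C+y.C) (x.D+y.D)
      (x.E+y.E+x.B*y.A) (x.F+y.F+x.C*y.A)⟩
instance : One (Md p) := ⟨mk' 0 0 0 0 0 0⟩
instance : Inv (Md p) :=
  ⟨fun x => mk' (-x.A) (-x.B) (-x.C) (-x.D) (-x.E + x.B*x.A) (-x.F + x.C*x.A)⟩

@[simp] lemma A_mul (x y : Md p) : (x*y).A = x.A + y.A := rfl
@[simp] lemma B_mul (x y : Md p) : (x*y).B = x.B + y.B := rfl
@[simp] lemma C_mul (x y : Md p) : (x*y).C = x.C + y.C := rfl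
@[simp] lemma D_mul (x y : Md p) : (x*y).D = x.D + y.D := rfl
@[simp] lemma E_mul (x y : Md p) : (x*y).E = x.E + y.E + x.B * y.A := rfl
@[simp] lemma F_mul (x y : Md p) : (x*y).F = x.F + y.F + x.C * y.A := rfl
@[simp] lemma A_one : (1 : Md p).A = 0 := rfl
@[simp] lemma B_one : (1 : Md p).B = 0 := rfl
@[simp] lemma C_one : (1 : Md p).C = 0 := rfl
@[simp] lemma D_one : (1 : Md p).D = 0 := rfl
@[simp] lemma E_one : (1 : Md p).E = 0 := rfl
@[simp] lemma F_one : (1 : Md p).F = 0 := rfl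
@[simp] lemma A_inv (x : Md p) : x⁻¹.A = -x.A := rfl
@[simp] lemma B_inv (x : Md p) : x⁻¹.B = -x.B := rfl
@[simp] lemma C_inv (x : Md p) : x⁻¹.C = -x.C := rfl
@[simp] lemma D_inv (x : Md p) : x⁻¹.D = -x.D := rfl
@[simp] lemma E_inv (x : Md p) : x⁻¹.E = -x.E + x.B * x.A := rfl
@[simp] lemma F_inv (x : Md p) : x⁻¹.F = -x.F + x.C * x.A := rfl

instance : Group (Md p) where
  mul_assoc x y z := by apply ext <;> simp <;> ring
  one_mul x := by apply ext <;> simp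
  mul_one x := by apply ext <;> simp
  inv_mul_cancel x := by apply ext <;> simp <;> ring

/-- power formula -/
lemma pow_formula (x : Md p) (n : ℕ) :
    x ^ n = mk' ((n : ZMod p)*x.A) ((n:ZMod p)*x.B) ((n:ZMod p)*x.C) ((n:ZMod p)*x.D)
      ((n:ZMod p)*x.E + ((n.choose 2 : ℕ):ZMod p)*(x.B*x.A))
      ((n:ZMod p)*x.F + ((n.choose 2 : ℕ):ZMod p)*(x.C*x.A)) := by
  induction n with
  | zero => apply ext <;> simp
  | succ n ih =>
    rw [pow_succ, ih]
    apply ext <;> simp [Nat.choose_succ_succ n 1, Nat.choose_one_right] <;> push_cast <;> ring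

instance [hp : Fact p.Prime] : Fintype (Md p) := by
  haveI : NeZero p := ⟨hp.1.ne_zero⟩; unfold Md; infer_instance

instance : DecidableEq (Md p) := by unfold Md; infer_instance

lemma card_eq (hp : p.Prime) : Nat.card (Md p) = p ^ 6 := by
  haveI : NeZero p := ⟨hp.ne_zero⟩
  simp [Md, Nat.card_prod, Nat.card_eq_fintype_card, ZMod.card]
  ring

lemma exp_p (hp : p.Prime) (h5 : 5 ≤ p) (x : Md p) : x ^ p = 1 := by
  haveI : NeZero p := ⟨hp.ne_zero⟩
  have h2 : ((p.choose 2 : ℕ) : ZMod p) = 0 := by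
    rw [ZMod.natCast_eq_zero_iff]
    exact hp.dvd_choose_self (by norm_num) (by omega)
  rw [pow_formula]
  apply ext <;> simp [h2, ZMod.natCast_self]

/-! ### commutators and conjugation in the model -/

lemma gc_eval (x y : Md p) :
    gc x y = mk' 0 0 0 0 (x.B*y.A - y.B*x.A) (x.C*y.A - y.C*x.A) := by
  unfold gc; apply ext <;> simp <;> ring

lemma conj_eval (y x : Md p) :
    y * x * y⁻¹ = mk' x.A x.B x.C x.D (x.E + y.B*x.A - x.B*y.A)
      (x.F + y.C*x.A - x.C*y.A) := by
  apply ext <;> simp <;> ring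

section Conj
variable [hp : Fact p.Prime]

/-- canonical representative of the conjugacy class -/
def finv (x : Md p) : Md p :=
  if x.A ≠ 0 then mk' x.A x.B x.C x.D 0 0
  else if x.B ≠ 0 then mk' 0 x.B x.C x.D 0 (x.F - x.E * x.C / x.B)
  else if x.C ≠ 0 then mk' 0 0 x.C x.D x.E 0
  else x

lemma finv_case1 {x : Md p} (h : x.A ≠ 0) : finv x = mk' x.A x.B x.C x.D 0 0 := by
  unfold finv; rw [if_pos h]

lemma finv_case2 {x : Md p} (h : x.A = 0) (h2 : x.B ≠ 0) :
    finv x = mk' 0 x.B x.C x.D 0 (x.F - x.E * x.C / x.B) := by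
  unfold finv; rw [if_neg (by simpa using h), if_pos h2]

lemma finv_case3 {x : Md p} (h : x.A = 0) (h2 : x.B = 0) (h3 : x.C ≠ 0) :
    finv x = mk' 0 0 x.C x.D x.E 0 := by
  unfold finv; rw [if_neg (by simpa using h), if_neg (by simpa using h2), if_pos h3]

lemma finv_case4 {x : Md p} (h : x.A = 0) (h2 : x.B = 0) (h3 : x.C = 0) :
    finv x = x := by
  unfold finv
  rw [if_neg (by simpa using h), if_neg (by simpa using h2), if_neg (by simpa using h3)]

lemma finv_A (x : Md p) : (finv x).A = x.A := by
  by_cases h1 : x.A ≠ 0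
  · rw [finv_case1 h1]; simp
  · push_neg at h1
    by_cases h2 : x.B ≠ 0
    · rw [finv_case2 h1 h2]; simp [h1]
    · push_neg at h2
      by_cases h3 : x.C ≠ 0
      · rw [finv_case3 h1 h2 h3]; simp [h1]
      · push_neg at h3; rw [finv_case4 h1 h2 h3]

lemma finv_B (x : Md p) : (finv x).B = x.B := by
  by_cases h1 : x.A ≠ 0
  · rw [finv_case1 h1]; simp
  · push_neg at h1
    by_cases h2 : x.B ≠ 0
    · rw [finv_case2 h1 h2]; simp
    · push_neg at h2
      by_cases h3 : x.C ≠ 0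
      · rw [finv_case3 h1 h2 h3]; simp [h2]
      · push_neg at h3; rw [finv_case4 h1 h2 h3]

lemma finv_C (x : Md p) : (finv x).C = x.C := by
  by_cases h1 : x.A ≠ 0
  · rw [finv_case1 h1]; simp
  · push_neg at h1
    by_cases h2 : x.B ≠ 0
    · rw [finv_case2 h1 h2]; simp
    · push_neg at h2
      by_cases h3 : x.C ≠ 0
      · rw [finv_case3 h1 h2 h3]; simp
      · push_neg at h3; rw [finv_case4 h1 h2 h3]

lemma finv_D (x : Md p) : (finv x).D = x.D := by
  by_cases h1 : x.A ≠ 0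
  · rw [finv_case1 h1]; simp
  · push_neg at h1
    by_cases h2 : x.B ≠ 0
    · rw [finv_case2 h1 h2]; simp
    · push_neg at h2
      by_cases h3 : x.C ≠ 0
      · rw [finv_case3 h1 h2 h3]; simp
      · push_neg at h3; rw [finv_case4 h1 h2 h3]

lemma finv_idem (x : Md p) : finv (finv x) = finv x := by
  by_cases h1 : x.A ≠ 0
  · rw [finv_case1 h1, finv_case1 (by simpa using h1)]; simp
  · push_neg at h1
    by_cases h2 : x.B ≠ 0
    · rw [finv_case2 h1 h2, finv_case2 (by simp) (by simpa using h2)]; simp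
    · push_neg at h2
      by_cases h3 : x.C ≠ 0
      · rw [finv_case3 h1 h2 h3, finv_case3 (by simp) (by simp) (by simpa using h3)]; simp
      · push_neg at h3
        rw [finv_case4 h1 h2 h3, finv_case4 h1 h2 h3]

lemma isConj_iff_finv {x y : Md p} : IsConj x y ↔ finv x = finv y := by
  constructor
  · rw [isConj_iff]
    rintro ⟨c, rfl⟩
    rw [conj_eval]
    by_cases h1 : x.A ≠ 0
    · rw [finv_case1 h1, finv_case1 (x := mk' x.A x.B x.C x.D _ _) (by simpa using h1)]
      simp
    · push_neg at h1
      by_cases h2 : x.B ≠ 0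
      · rw [finv_case2 h1 h2, finv_case2 (x := mk' x.A x.B x.C x.D _ _) (by simpa using h1)
          (by simpa using h2)]
        apply ext <;> simp [h1]
        field_simp
        ring
      · push_neg at h2
        by_cases h3 : x.C ≠ 0
        · rw [finv_case3 h1 h2 h3, finv_case3 (x := mk' x.A x.B x.C x.D _ _) (by simpa using h1)
            (by simpa using h2) (by simpa using h3)]
          apply ext <;> simp [h1, h2, h3]
        · push_neg at h3
          rw [finv_case4 h1 h2 h3, finv_case4 (x := mk' x.A x.B x.C x.D _ _) (by simpa using h1)
            (by simpa using h2) (by simpa using h3)]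
          apply ext <;> simp [h1, h2, h3]
  · intro h
    have hA : x.A = y.A := by rw [← finv_A x, ← finv_A y, h]
    have hB : x.B = y.B := by rw [← finv_B x, ← finv_B y, h]
    have hC : x.C = y.C := by rw [← finv_C x, ← finv_C y, h]
    have hD : x.D = y.D := by rw [← finv_D x, ← finv_D y, h]
    rw [isConj_iff]
    by_cases h1 : x.A ≠ 0
    · refine ⟨mk' 0 ((y.E - x.E)/x.A) ((y.F - x.F)/x.A) 0 0 0, ?_⟩
      rw [conj_eval]
      have hy : y.A ≠ 0 := hA ▸ h1
      refine ext ?_ ?_ ?_ ?_ ?_ ?_ <;> simp [hA, hB, hC, hD]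
      · rw [div_mul_eq_mul_div, mul_div_assoc, div_self hy, mul_one]; ring
      · rw [div_mul_eq_mul_div, mul_div_assoc, div_self hy, mul_one]; ring
    · push_neg at h1
      by_cases h2 : x.B ≠ 0
      · refine ⟨mk' ((x.E - y.E)/x.B) 0 0 0 0 0, ?_⟩
        rw [conj_eval]
        have hF : x.F - x.E * x.C / x.B = y.F - y.E * y.C / y.B := by
          have := congrArg F (h)
          rwa [finv_case2 h1 h2, finv_case2 (hA ▸ h1) (hB ▸ h2), F_mk, F_mk] at this
        have hy : y.B ≠ 0 := hB ▸ h2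
        refine ext ?_ ?_ ?_ ?_ ?_ ?_ <;> simp [hA, hB, hC, hD, h1]
        · rw [mul_comm, div_mul_cancel₀ _ hy]; ring
        · rw [← hB, ← hC] at hF ⊢
          field_simp at hF ⊢
          linear_combination hF
      · push_neg at h2
        by_cases h3 : x.C ≠ 0
        · refine ⟨mk' ((x.F - y.F)/x.C) 0 0 0 0 0, ?_⟩
          rw [conj_eval]
          have hE : x.E = y.E := by
            have := congrArg E (h)
            rwa [finv_case3 h1 h2 h3, finv_case3 (hA ▸ h1) (hB ▸ h2) (hC ▸ h3),
              E_mk, E_mk] at this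
          have hy : y.C ≠ 0 := hC ▸ h3
          refine ext ?_ ?_ ?_ ?_ ?_ ?_ <;> simp [hA, hB, hC, hD, hE, h1, h2]
          · exact Or.inl (hB ▸ h2)
          · rw [mul_comm, div_mul_cancel₀ _ hy]; ring
        · push_neg at h3
          refine ⟨1, ?_⟩
          have hx := finv_case4 h1 h2 h3
          have hy := finv_case4 (hA ▸ h1) (hB ▸ h2) (hC ▸ h3)
          rw [hx, hy] at h
          rw [h]
          group

end Conj
section ConjCount
variable [hp : Fact p.Prime]

def conjEquiv : ConjClasses (Md p) ≃ {x : Md p // finv x = x} where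
  toFun := Quotient.lift (fun g => (⟨finv g, finv_idem g⟩ : {x : Md p // finv x = x}))
    (fun _ _ hab => Subtype.ext (isConj_iff_finv.mp hab))
  invFun s := ConjClasses.mk s.1
  left_inv := by
    intro q
    obtain ⟨g, rfl⟩ := ConjClasses.mk_surjective q
    show ConjClasses.mk (finv g) = ConjClasses.mk g
    rw [ConjClasses.mk_eq_mk_iff_isConj, isConj_iff_finv, finv_idem]
  right_inv s := Subtype.ext s.2

lemma card_ne_zero_zmod : Fintype.card {a : ZMod p // a ≠ 0} = p - 1 := by
  rw [← ZMod.card_units p]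
  exact (Fintype.card_congr unitsEquivNeZero).symm

def e1 : {x : Md p // x.A ≠ 0 ∧ x.E = 0 ∧ x.F = 0} ≃
    {a : ZMod p // a ≠ 0} × ZMod p × ZMod p × ZMod p where
  toFun x := (⟨x.1.A, x.2.1⟩, x.1.B, x.1.C, x.1.D)
  invFun y := ⟨mk' y.1.1 y.2.1 y.2.2.1 y.2.2.2 0 0, by simp [y.1.2]⟩
  left_inv x := Subtype.ext (by apply ext <;> simp [x.2.2.1, x.2.2.2])
  right_inv y := rfl

def e2 : {x : Md p // x.A = 0 ∧ x.B ≠ 0 ∧ x.E = 0} ≃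
    {a : ZMod p // a ≠ 0} × ZMod p × ZMod p × ZMod p where
  toFun x := (⟨x.1.B, x.2.2.1⟩, x.1.C, x.1.D, x.1.F)
  invFun y := ⟨mk' 0 y.1.1 y.2.1 y.2.2.1 0 y.2.2.2, by simp [y.1.2]⟩
  left_inv x := Subtype.ext (by apply ext <;> simp [x.2.1, x.2.2.2])
  right_inv y := rfl

def e3 : {x : Md p // x.A = 0 ∧ x.B = 0 ∧ x.C ≠ 0 ∧ x.F = 0} ≃
    {a : ZMod p // a ≠ 0} × ZMod p × ZMod p where
  toFun x := (⟨x.1.C, x.2.2.2.1⟩, x.1.D, x.1.E)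
  invFun y := ⟨mk' 0 0 y.1.1 y.2.1 y.2.2 0, by simp [y.1.2]⟩
  left_inv x := Subtype.ext (by apply ext <;> simp [x.2.1, x.2.2.1, x.2.2.2.2])
  right_inv y := rfl

def e4 : {x : Md p // x.A = 0 ∧ x.B = 0 ∧ x.C = 0} ≃ ZMod p × ZMod p × ZMod p where
  toFun x := (x.1.D, x.1.E, x.1.F)
  invFun y := ⟨mk' 0 0 0 y.1 y.2.1 y.2.2, by simp⟩
  left_inv x := Subtype.ext (by apply ext <;> simp [x.2.1, x.2.2.1, x.2.2.2])
  right_inv y := rfl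

lemma card_zmod' : Fintype.card (ZMod p) = p := by
  haveI : NeZero p := ⟨hp.1.ne_zero⟩
  exact ZMod.card p

lemma card_fixed : Fintype.card {x : Md p // finv x = x} = 2 * p ^ 4 - p ^ 2 := by
  classical
  haveI : NeZero p := ⟨hp.1.ne_zero⟩
  have hsplit1 := Finset.card_filter_add_card_filter_not
    (s := Finset.univ.filter (fun x : Md p => finv x = x)) (fun x : Md p => x.A ≠ 0)
  have hsplit2 := Finset.card_filter_add_card_filter_not
    (s := Finset.univ.filter (fun x : Md p => finv x = x ∧ ¬ x.A ≠ 0)) (fun x : Md p => x.B ≠ 0)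
  have hsplit3 := Finset.card_filter_add_card_filter_not
    (s := Finset.univ.filter (fun x : Md p => (finv x = x ∧ ¬ x.A ≠ 0) ∧ ¬ x.B ≠ 0))
    (fun x : Md p => x.C ≠ 0)
  simp only [Finset.filter_filter] at hsplit1 hsplit2 hsplit3
  -- region identifications
  have hr1 : Finset.univ.filter (fun x : Md p => finv x = x ∧ x.A ≠ 0) =
      Finset.univ.filter (fun x : Md p => x.A ≠ 0 ∧ x.E = 0 ∧ x.F = 0) := by
    apply Finset.filter_congr
    intro x _
    constructor
    · rintro ⟨h, hA⟩
      rw [finv_case1 hA] at h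
      have hE := (congrArg E h).symm
      have hF := (congrArg F h).symm
      simp at hE hF
      exact ⟨hA, hE, hF⟩
    · rintro ⟨hA, hE, hF⟩
      refine ⟨?_, hA⟩
      rw [finv_case1 hA]
      apply ext <;> simp [hE, hF]
  have hr2 : Finset.univ.filter (fun x : Md p => (finv x = x ∧ ¬ x.A ≠ 0) ∧ x.B ≠ 0) =
      Finset.univ.filter (fun x : Md p => x.A = 0 ∧ x.B ≠ 0 ∧ x.E = 0) := by
    apply Finset.filter_congr
    intro x _
    constructor
    · rintro ⟨⟨h, hA⟩, hB⟩
      push_neg at hA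
      rw [finv_case2 hA hB] at h
      have hE := congrArg E h
      simp at hE
      exact ⟨hA, hB, hE.symm⟩
    · rintro ⟨hA, hB, hE⟩
      refine ⟨⟨?_, by simp [hA]⟩, hB⟩
      rw [finv_case2 hA hB]
      apply ext <;> simp [hA, hE]
  have hr3 : Finset.univ.filter
      (fun x : Md p => ((finv x = x ∧ ¬ x.A ≠ 0) ∧ ¬ x.B ≠ 0) ∧ x.C ≠ 0) =
      Finset.univ.filter (fun x : Md p => x.A = 0 ∧ x.B = 0 ∧ x.C ≠ 0 ∧ x.F = 0) := by
    apply Finset.filter_congr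
    intro x _
    constructor
    · rintro ⟨⟨⟨h, hA⟩, hB⟩, hC⟩
      push_neg at hA hB
      rw [finv_case3 hA hB hC] at h
      have hF := congrArg F h
      simp at hF
      exact ⟨hA, hB, hC, hF.symm⟩
    · rintro ⟨hA, hB, hC, hF⟩
      refine ⟨⟨⟨?_, by simp [hA]⟩, by simp [hB]⟩, hC⟩
      rw [finv_case3 hA hB hC]
      apply ext <;> simp [hA, hB, hF]
  have hr4 : Finset.univ.filter
      (fun x : Md p => (((finv x = x ∧ ¬ x.A ≠ 0) ∧ ¬ x.B ≠ 0)) ∧ ¬ x.C ≠ 0) =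
      Finset.univ.filter (fun x : Md p => x.A = 0 ∧ x.B = 0 ∧ x.C = 0) := by
    apply Finset.filter_congr
    intro x _
    constructor
    · rintro ⟨⟨⟨_, hA⟩, hB⟩, hC⟩
      push_neg at hA hB hC
      exact ⟨hA, hB, hC⟩
    · rintro ⟨hA, hB, hC⟩
      exact ⟨⟨⟨finv_case4 hA hB hC, by simp [hA]⟩, by simp [hB]⟩, by simp [hC]⟩
  -- cardinalities of the four regions
  have hc1 : (Finset.univ.filter (fun x : Md p => x.A ≠ 0 ∧ x.E = 0 ∧ x.F = 0)).card
      = (p-1) * (p*(p*p)) := by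
    rw [← Fintype.card_subtype]
    rw [Fintype.card_congr e1]
    simp [card_ne_zero_zmod, card_zmod']
  have hc2 : (Finset.univ.filter (fun x : Md p => x.A = 0 ∧ x.B ≠ 0 ∧ x.E = 0)).card
      = (p-1) * (p*(p*p)) := by
    rw [← Fintype.card_subtype, Fintype.card_congr e2]
    simp [card_ne_zero_zmod, card_zmod']
  have hc3 : (Finset.univ.filter (fun x : Md p => x.A = 0 ∧ x.B = 0 ∧ x.C ≠ 0 ∧ x.F = 0)).card
      = (p-1) * (p*p) := by
    rw [← Fintype.card_subtype, Fintype.card_congr e3]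
    simp [card_ne_zero_zmod, card_zmod']
  have hc4 : (Finset.univ.filter (fun x : Md p => x.A = 0 ∧ x.B = 0 ∧ x.C = 0)).card
      = p*(p*p) := by
    rw [← Fintype.card_subtype, Fintype.card_congr e4]
    simp [card_zmod']
  rw [Fintype.card_subtype]
  rw [hr1, hc1] at hsplit1
  rw [hr2, hc2] at hsplit2
  rw [hr3, hc3, hr4, hc4] at hsplit3
  rw [← hsplit1, ← hsplit2, ← hsplit3]
  obtain ⟨q, rfl⟩ : ∃ q, p = q + 1 := ⟨p-1, (Nat.succ_pred_eq_of_pos hp.1.pos).symm⟩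
  have hsub : 2 * (q+1) ^ 4 - (q+1) ^ 2 = (q+1)^2 * (2*q^2+4*q+1) :=
    Nat.sub_eq_of_eq_add (by ring)
  rw [hsub]
  simp only [Nat.add_sub_cancel]
  ring

lemma card_conjClasses : Nat.card (ConjClasses (Md p)) = 2 * p ^ 4 - p ^ 2 := by
  rw [Nat.card_congr (conjEquiv (p := p)), Nat.card_eq_fintype_card, card_fixed]

end ConjCount
end Md

/-! ### The presented group -/

def R0 : Set (FreeGroup (Fin 4)) :=
  {fgComm (FreeGroup.of (2 : Fin 4)) (FreeGroup.of (1 : Fin 4)),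
   fgComm (FreeGroup.of (3 : Fin 4)) (FreeGroup.of (0 : Fin 4)),
   fgComm (FreeGroup.of (3 : Fin 4)) (FreeGroup.of (1 : Fin 4)),
   fgComm (FreeGroup.of (3 : Fin 4)) (FreeGroup.of (2 : Fin 4))}

variable (p : ℕ)

abbrev PP := PresentedGroup (classTwoRels p 4 R0)

def pmk : FreeGroup (Fin 4) →* PP p := QuotientGroup.mk' _

lemma pmk_rel {r : FreeGroup (Fin 4)} (h : r ∈ classTwoRels p 4 R0) : pmk p r = 1 :=
  (QuotientGroup.eq_one_iff r).mpr (Subgroup.subset_normalClosure h)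

lemma pmk_surj : Function.Surjective (pmk p) := QuotientGroup.mk'_surjective _

lemma pmk_of (i : Fin 4) : pmk p (FreeGroup.of i) = PresentedGroup.of i := rfl

lemma Pexp (g : PP p) : g ^ p = 1 := by
  obtain ⟨w, rfl⟩ := pmk_surj p g
  rw [← map_pow]
  exact pmk_rel p (Set.mem_union_left _ (Set.mem_union_right _ ⟨w, rfl⟩))

lemma Pcen : ∀ x y z : PP p, gc (gc x y) z = 1 := by
  intro x y z
  obtain ⟨u, rfl⟩ := pmk_surj p x
  obtain ⟨v, rfl⟩ := pmk_surj p y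
  obtain ⟨w, rfl⟩ := pmk_surj p z
  rw [← map_gc, ← map_gc]
  exact pmk_rel p (Set.mem_union_right _ ⟨u, v, w, rfl⟩)

def pA : PP p := PresentedGroup.of 0
def pB : PP p := PresentedGroup.of 1
def pC : PP p := PresentedGroup.of 2
def pD : PP p := PresentedGroup.of 3

lemma rel_in_R0 {r : FreeGroup (Fin 4)} (h : r ∈ R0) : pmk p r = 1 :=
  pmk_rel p (Set.mem_union_left _ (Set.mem_union_left _ h))

lemma gcCB : gc (pC p) (pB p) = 1 := by
  rw [pC, pB, ← pmk_of, ← pmk_of, ← map_gc, ← fgComm_eq_gc]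
  exact rel_in_R0 p (by simp [R0])

lemma gcDA : gc (pD p) (pA p) = 1 := by
  rw [pD, pA, ← pmk_of, ← pmk_of, ← map_gc, ← fgComm_eq_gc]
  exact rel_in_R0 p (by simp [R0])

lemma gcDB : gc (pD p) (pB p) = 1 := by
  rw [pD, pB, ← pmk_of, ← pmk_of, ← map_gc, ← fgComm_eq_gc]
  exact rel_in_R0 p (by simp [R0])

lemma gcDC : gc (pD p) (pC p) = 1 := by
  rw [pD, pC, ← pmk_of, ← pmk_of, ← map_gc, ← fgComm_eq_gc]
  exact rel_in_R0 p (by simp [R0])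

def EE : PP p := gc (pB p) (pA p)
def FF : PP p := gc (pC p) (pA p)

lemma hEz (z : PP p) : Commute (EE p) z := central_gc (Pcen p) _ _ z
lemma hFz (z : PP p) : Commute (FF p) z := central_gc (Pcen p) _ _ z
lemma hDA' : Commute (pD p) (pA p) := commute_of_gc_eq_one (gcDA p)
lemma hDB' : Commute (pD p) (pB p) := commute_of_gc_eq_one (gcDB p)
lemma hDC' : Commute (pD p) (pC p) := commute_of_gc_eq_one (gcDC p)
lemma hCB' : Commute (pC p) (pB p) := commute_of_gc_eq_one (gcCB p)

lemma hswapBA (k : ℕ) : pB p^k * pA p = pA p * pB p^k * EE p^k := by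
  have h := swap_pow (Pcen p) (pA p) (pB p) 1 k
  simpa [EE] using h

lemma hswapCA (k : ℕ) : pC p^k * pA p = pA p * pC p^k * FF p^k := by
  have h := swap_pow (Pcen p) (pA p) (pC p) 1 k
  simpa [FF] using h

def nf (i j k l m n : ℕ) : PP p :=
  pA p^i * pB p^j * pC p^k * pD p^l * EE p^m * FF p^n

lemma step_A (i j k l m n : ℕ) :
    nf p i j k l m n * pA p = nf p (i+1) j k l (m+j) (n+k) := by
  calc nf p i j k l m n * pA p
      = pA p^i * pB p^j * pC p^k * pD p^l * EE p^m * (FF p^n * pA p) := by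
        unfold nf; group
    _ = pA p^i * pB p^j * pC p^k * pD p^l * EE p^m * (pA p * FF p^n) := by
        rw [((hFz p (pA p)).pow_left n).eq]
    _ = pA p^i * pB p^j * pC p^k * pD p^l * (EE p^m * pA p) * FF p^n := by group
    _ = pA p^i * pB p^j * pC p^k * pD p^l * (pA p * EE p^m) * FF p^n := by
        rw [((hEz p (pA p)).pow_left m).eq]
    _ = pA p^i * pB p^j * pC p^k * (pD p^l * pA p) * EE p^m * FF p^n := by group
    _ = pA p^i * pB p^j * pC p^k * (pA p * pD p^l) * EE p^m * FF p^n := by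
        rw [((hDA' p).pow_left l).eq]
    _ = pA p^i * pB p^j * (pC p^k * pA p) * pD p^l * EE p^m * FF p^n := by group
    _ = pA p^i * pB p^j * (pA p * pC p^k * FF p^k) * pD p^l * EE p^m * FF p^n := by
        rw [hswapCA]
    _ = pA p^i * pB p^j * pA p * pC p^k * (FF p^k * (pD p^l * EE p^m)) * FF p^n := by group
    _ = pA p^i * pB p^j * pA p * pC p^k * ((pD p^l * EE p^m) * FF p^k) * FF p^n := by
        rw [((hFz p (pD p^l * EE p^m)).pow_left k).eq]
    _ = pA p^i * (pB p^j * pA p) * pC p^k * pD p^l * EE p^m * (FF p^k * FF p^n) := by group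
    _ = pA p^i * (pA p * pB p^j * EE p^j) * pC p^k * pD p^l * EE p^m * (FF p^k * FF p^n) := by
        rw [hswapBA]
    _ = pA p^i * pA p * pB p^j * (EE p^j * (pC p^k * pD p^l)) * EE p^m * (FF p^k * FF p^n) := by
        group
    _ = pA p^i * pA p * pB p^j * ((pC p^k * pD p^l) * EE p^j) * EE p^m * (FF p^k * FF p^n) := by
        rw [((hEz p (pC p^k * pD p^l)).pow_left j).eq]
    _ = nf p (i+1) j k l (m+j) (n+k) := by
        unfold nf
        rw [pow_succ, pow_add, pow_add]
        group

lemma step_B (i j k l m n : ℕ) :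
    nf p i j k l m n * pB p = nf p i (j+1) k l m n := by
  calc nf p i j k l m n * pB p
      = pA p^i * pB p^j * pC p^k * pD p^l * EE p^m * (FF p^n * pB p) := by
        unfold nf; group
    _ = pA p^i * pB p^j * pC p^k * pD p^l * (EE p^m * pB p) * FF p^n := by
        rw [((hFz p (pB p)).pow_left n).eq]; group
    _ = pA p^i * pB p^j * pC p^k * (pD p^l * pB p) * EE p^m * FF p^n := by
        rw [((hEz p (pB p)).pow_left m).eq]; group
    _ = pA p^i * pB p^j * (pC p^k * pB p) * pD p^l * EE p^m * FF p^n := by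
        rw [((hDB' p).pow_left l).eq]; group
    _ = pA p^i * (pB p^j * pB p) * pC p^k * pD p^l * EE p^m * FF p^n := by
        rw [((hCB' p).pow_left k).eq]; group
    _ = nf p i (j+1) k l m n := by unfold nf; rw [pow_succ]
lemma step_C (i j k l m n : ℕ) :
    nf p i j k l m n * pC p = nf p i j (k+1) l m n := by
  calc nf p i j k l m n * pC p
      = pA p^i * pB p^j * pC p^k * pD p^l * EE p^m * (FF p^n * pC p) := by
        unfold nf; group
    _ = pA p^i * pB p^j * pC p^k * pD p^l * (EE p^m * pC p) * FF p^n := by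
        rw [((hFz p (pC p)).pow_left n).eq]; group
    _ = pA p^i * pB p^j * pC p^k * (pD p^l * pC p) * EE p^m * FF p^n := by
        rw [((hEz p (pC p)).pow_left m).eq]; group
    _ = pA p^i * pB p^j * (pC p^k * pC p) * pD p^l * EE p^m * FF p^n := by
        rw [((hDC' p).pow_left l).eq]; group
    _ = nf p i j (k+1) l m n := by unfold nf; rw [pow_succ]

lemma step_D (i j k l m n : ℕ) :
    nf p i j k l m n * pD p = nf p i j k (l+1) m n := by
  calc nf p i j k l m n * pD p
      = pA p^i * pB p^j * pC p^k * pD p^l * EE p^m * (FF p^n * pD p) := by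
        unfold nf; group
    _ = pA p^i * pB p^j * pC p^k * pD p^l * (EE p^m * pD p) * FF p^n := by
        rw [((hFz p (pD p)).pow_left n).eq]; group
    _ = pA p^i * pB p^j * pC p^k * (pD p^l * pD p) * EE p^m * FF p^n := by
        rw [((hEz p (pD p)).pow_left m).eq]; group
    _ = nf p i j k (l+1) m n := by unfold nf; rw [pow_succ]

lemma pmk_pure (i : Fin 4) : pmk p (pure i) = PresentedGroup.of i := rfl

lemma nf_one : nf p 0 0 0 0 0 0 = 1 := by unfold nf; simp

def NF : Set (PP p) := {g | ∃ i j k l m n : ℕ, g = nf p i j k l m n}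

lemma NF_mul_of {s : PP p} (hs : s ∈ NF p) (t : Fin 4) :
    s * PresentedGroup.of t ∈ NF p := by
  obtain ⟨i,j,k,l,m,n,rfl⟩ := hs
  fin_cases t
  · exact ⟨i+1, j, k, l, m+j, n+k, step_A p i j k l m n⟩
  · exact ⟨i, j+1, k, l, m, n, step_B p i j k l m n⟩
  · exact ⟨i, j, k+1, l, m, n, step_C p i j k l m n⟩
  · exact ⟨i, j, k, l+1, m, n, step_D p i j k l m n⟩

lemma NF_mul_of_pow {s : PP p} (hs : s ∈ NF p) (t : Fin 4) (nn : ℕ) :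
    s * (PresentedGroup.of t)^nn ∈ NF p := by
  induction nn with
  | zero => simpa using hs
  | succ nn ih =>
    rw [pow_succ, ← mul_assoc]
    exact NF_mul_of p ih t

lemma NF_all (hp0 : 0 < p) (g : PP p) : g ∈ NF p := by
  obtain ⟨w, rfl⟩ := pmk_surj p g
  suffices h : ∀ s ∈ NF p, s * pmk p w ∈ NF p by
    simpa using h 1 ⟨0,0,0,0,0,0, (nf_one p).symm⟩
  induction w using FreeGroup.induction_on with
  | C1 => intro s hs; simpa using hs
  | of x => intro s hs; rw [pmk_of]; exact NF_mul_of p hs x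
  | inv_of x _ =>
    intro s hs
    have hg : (PresentedGroup.of x : PP p) ^ p = 1 := Pexp p _
    have hinv : (PresentedGroup.of x : PP p)⁻¹ = (PresentedGroup.of x) ^ (p-1) := by
      apply inv_eq_of_mul_eq_one_right
      rw [← pow_succ']
      rwa [Nat.sub_add_cancel hp0]
    rw [map_inv, pmk_of, hinv]
    exact NF_mul_of_pow p hs x (p-1)
  | mul u v ihu ihv =>
    intro s hs
    rw [map_mul, ← mul_assoc]
    exact ihv _ (ihu s hs)

lemma pow_mod_p {G : Type*} [Group G] {g : G} (hg : g^p = 1) (i : ℕ) :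
    g^(i % p) = g^i := by
  conv_rhs => rw [← Nat.div_add_mod i p]
  rw [pow_add, pow_mul, hg, one_pow, one_mul]

def fsurj (hp0 : 0 < p) (v : Fin p × Fin p × Fin p × Fin p × Fin p × Fin p) : PP p :=
  nf p v.1 v.2.1 v.2.2.1 v.2.2.2.1 v.2.2.2.2.1 v.2.2.2.2.2

lemma fsurj_surj (hp0 : 0 < p) : Function.Surjective (fsurj p hp0) := by
  intro g
  obtain ⟨i,j,k,l,m,n,rfl⟩ := NF_all p hp0 g
  refine ⟨(⟨i % p, Nat.mod_lt _ hp0⟩, ⟨j % p, Nat.mod_lt _ hp0⟩, ⟨k % p, Nat.mod_lt _ hp0⟩,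
    ⟨l % p, Nat.mod_lt _ hp0⟩, ⟨m % p, Nat.mod_lt _ hp0⟩, ⟨n % p, Nat.mod_lt _ hp0⟩), ?_⟩
  show nf p (i % p) (j % p) (k % p) (l % p) (m % p) (n % p) = nf p i j k l m n
  unfold nf
  rw [pow_mod_p p (Pexp p _), pow_mod_p p (Pexp p _), pow_mod_p p (Pexp p _),
    pow_mod_p p (Pexp p _), pow_mod_p p (Pexp p _), pow_mod_p p (Pexp p _)]

lemma PP_finite (hp0 : 0 < p) : Finite (PP p) :=
  Finite.of_surjective _ (fsurj_surj p hp0)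

lemma card_PP_le (hp0 : 0 < p) : Nat.card (PP p) ≤ p^6 := by
  have h := Nat.card_le_card_of_surjective _ (fsurj_surj p hp0)
  calc Nat.card (PP p) ≤ _ := h
    _ = p^6 := by simp [Nat.card_prod]; ring

/-! ### the lift to the model -/

def gA : Md p := Md.mk' 1 0 0 0 0 0
def gB : Md p := Md.mk' 0 1 0 0 0 0
def gC : Md p := Md.mk' 0 0 1 0 0 0
def gD : Md p := Md.mk' 0 0 0 1 0 0
def gE : Md p := Md.mk' 0 0 0 0 1 0
def gF : Md p := Md.mk' 0 0 0 0 0 1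

def fgen : Fin 4 → Md p := fun i =>
  match i with
  | 0 => gA p
  | 1 => gB p
  | 2 => gC p
  | 3 => gD p

lemma fgen0 : fgen p 0 = gA p := rfl
lemma fgen1 : fgen p 1 = gB p := rfl
lemma fgen2 : fgen p 2 = gC p := rfl
lemma fgen3 : fgen p 3 = gD p := rfl

lemma Md.gc_gc (x y z : Md p) : gc (gc x y) z = 1 := by
  rw [Md.gc_eval x y, Md.gc_eval]
  apply Md.ext <;> simp

lemma hrelM (hp : p.Prime) (h5 : 5 ≤ p) :
    ∀ r ∈ classTwoRels p 4 R0, FreeGroup.lift (fgen p) r = 1 := by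
  rintro r ((hR | ⟨w, rfl⟩) | ⟨u, v, w, rfl⟩)
  · simp only [R0, Set.mem_insert_iff, Set.mem_singleton_iff] at hR
    rcases hR with rfl | rfl | rfl | rfl <;>
      · rw [fgComm_eq_gc, map_gc]
        simp only [FreeGroup.lift_apply_of, fgen0, fgen1, fgen2, fgen3]
        rw [Md.gc_eval]
        apply Md.ext <;> simp [gA, gB, gC, gD]
  · rw [map_pow]
    exact Md.exp_p hp h5 _
  · rw [fgComm_eq_gc, fgComm_eq_gc, map_gc, map_gc]
    exact Md.gc_gc p _ _ _

noncomputable def phi (hp : p.Prime) (h5 : 5 ≤ p) : PP p →* Md p :=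
  PresentedGroup.toGroup (hrelM p hp h5)

lemma phi_of (hp : p.Prime) (h5 : 5 ≤ p) (i : Fin 4) :
    phi p hp h5 (PresentedGroup.of i) = fgen p i :=
  PresentedGroup.toGroup.of _

lemma Md.prod_formula (i j k l m n : ℕ) :
    (gA p^i * gB p^j * gC p^k * gD p^l * gE p^m * gF p^n : Md p) =
      Md.mk' (i : ZMod p) j k l m n := by
  apply Md.ext <;>
    simp [Md.pow_formula, gA, gB, gC, gD, gE, gF]

lemma phi_surj (hp : p.Prime) (h5 : 5 ≤ p) : Function.Surjective (phi p hp h5) := by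
  haveI : NeZero p := ⟨hp.ne_zero⟩
  intro m
  refine ⟨pA p^(m.A.val) * pB p^(m.B.val) * pC p^(m.C.val) * pD p^(m.D.val) *
    EE p^(m.E.val) * FF p^(m.F.val), ?_⟩
  have hBA : phi p hp h5 (EE p) = gE p := by
    rw [EE, map_gc, pB, pA, phi_of, phi_of, fgen0, fgen1, Md.gc_eval]
    apply Md.ext <;> simp [gA, gB, gE]
  have hCA : phi p hp h5 (FF p) = gF p := by
    rw [FF, map_gc, pC, pA, phi_of, phi_of, fgen0, fgen2, Md.gc_eval]
    apply Md.ext <;> simp [gA, gC, gF]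
  rw [map_mul, map_mul, map_mul, map_mul, map_mul,
    map_pow, map_pow, map_pow, map_pow, map_pow, map_pow,
    hBA, hCA, pA, pB, pC, pD, phi_of, phi_of, phi_of, phi_of,
    fgen0, fgen1, fgen2, fgen3, Md.prod_formula]
  apply Md.ext <;> simp [ZMod.natCast_val, ZMod.cast_id]

lemma card_PP (hp : p.Prime) (h5 : 5 ≤ p) : Nat.card (PP p) = p ^ 6 := by
  haveI := PP_finite p hp.pos
  refine le_antisymm (card_PP_le p hp.pos) ?_
  have h := Nat.card_le_card_of_surjective _ (phi_surj p hp h5)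
  rwa [Md.card_eq hp] at h

lemma phi_bij (hp : p.Prime) (h5 : 5 ≤ p) : Function.Bijective (phi p hp h5) := by
  haveI := PP_finite p hp.pos
  exact (Nat.bijective_iff_surjective_and_card _).mpr
    ⟨phi_surj p hp h5, by rw [card_PP p hp h5, Md.card_eq hp]⟩

noncomputable def theta (hp : p.Prime) (h5 : 5 ≤ p) : PP p ≃* Md p :=
  MulEquiv.ofBijective _ (phi_bij p hp h5)

/-! ### linear functionals on the model -/

def chi (r s t u : ZMod p) : Md p →* Multiplicative (ZMod p) where
  toFun m := Multiplicative.ofAdd (r*m.A + s*m.B + t*m.C + u*m.D)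
  map_one' := by simp
  map_mul' x y := by
    show Multiplicative.ofAdd _ = Multiplicative.ofAdd _ * Multiplicative.ofAdd _
    rw [← ofAdd_add]
    apply congrArg
    simp
    ring

section Quad
variable {p}
variable (q1 q2 q3 q4 : Md p)

lemma htool (hgen : Subgroup.closure ({q1, q2, q3, q4} : Set (Md p)) = ⊤)
    (r s t u : ZMod p)
    (h1 : r*q1.A + s*q1.B + t*q1.C + u*q1.D = 0)
    (h2 : r*q2.A + s*q2.B + t*q2.C + u*q2.D = 0)
    (h3 : r*q3.A + s*q3.B + t*q3.C + u*q3.D = 0)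
    (h4 : r*q4.A + s*q4.B + t*q4.C + u*q4.D = 0) :
    r = 0 ∧ s = 0 ∧ t = 0 ∧ u = 0 := by
  have hker : ∀ m : Md p, chi p r s t u m = 1 := by
    intro m
    have hm : m ∈ Subgroup.closure ({q1, q2, q3, q4} : Set (Md p)) := by
      rw [hgen]; trivial
    have hsub : ({q1, q2, q3, q4} : Set (Md p)) ⊆ (chi p r s t u).ker := by
      intro x hx
      have hchi : ∀ (m : Md p), r*m.A + s*m.B + t*m.C + u*m.D = 0 →
          m ∈ (chi p r s t u).ker := by
        intro m hm0
        show chi p r s t u m = 1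
        show Multiplicative.ofAdd (r*m.A + s*m.B + t*m.C + u*m.D) = 1
        rw [hm0]
        rfl
      rcases hx with rfl | rfl | rfl | rfl
      · exact hchi _ h1
      · exact hchi _ h2
      · exact hchi _ h3
      · exact hchi _ h4
    have := (Subgroup.closure_le _).mpr hsub hm
    exact this
  have hr := hker (Md.mk' 1 0 0 0 0 0)
  have hs := hker (Md.mk' 0 1 0 0 0 0)
  have ht := hker (Md.mk' 0 0 1 0 0 0)
  have hu := hker (Md.mk' 0 0 0 1 0 0)
  have hext : ∀ z : ZMod p, Multiplicative.ofAdd z = 1 → z = 0 := fun z h => by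
    have := congrArg Multiplicative.toAdd h
    simpa using this
  have hr' := hext _ hr
  have hs' := hext _ hs
  have ht' := hext _ ht
  have hu' := hext _ hu
  simp at hr' hs' ht' hu'
  exact ⟨hr', hs', ht', hu'⟩

end Quad

lemma Md.quadA {p : ℕ} (x1 x2 x3 x4 : Md p) (i j k l : ℕ) :
    (x1^i * x2^j * x3^k * x4^l).A = (i : ZMod p)*x1.A + (j : ZMod p)*x2.A + (k : ZMod p)*x3.A + (l : ZMod p)*x4.A := by
  simp [Md.pow_formula]
lemma Md.quadB {p : ℕ} (x1 x2 x3 x4 : Md p) (i j k l : ℕ) :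
    (x1^i * x2^j * x3^k * x4^l).B = (i : ZMod p)*x1.B + (j : ZMod p)*x2.B + (k : ZMod p)*x3.B + (l : ZMod p)*x4.B := by
  simp [Md.pow_formula]
lemma Md.quadC {p : ℕ} (x1 x2 x3 x4 : Md p) (i j k l : ℕ) :
    (x1^i * x2^j * x3^k * x4^l).C = (i : ZMod p)*x1.C + (j : ZMod p)*x2.C + (k : ZMod p)*x3.C + (l : ZMod p)*x4.C := by
  simp [Md.pow_formula]
lemma Md.quadD {p : ℕ} (x1 x2 x3 x4 : Md p) (i j k l : ℕ) :
    (x1^i * x2^j * x3^k * x4^l).D = (i : ZMod p)*x1.D + (j : ZMod p)*x2.D + (k : ZMod p)*x3.D + (l : ZMod p)*x4.D := by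
  simp [Md.pow_formula]

lemma Md.cen_pow {p : ℕ} (e f : ZMod p) (n : ℕ) :
    (Md.mk' 0 0 0 0 e f)^n = Md.mk' 0 0 0 0 ((n : ZMod p)*e) ((n : ZMod p)*f) := by
  rw [Md.pow_formula]; apply Md.ext <;> simp

lemma Md.cen_mul {p : ℕ} (e f e' f' : ZMod p) :
    Md.mk' 0 0 0 0 e f * Md.mk' 0 0 0 0 e' f' = Md.mk' 0 0 0 0 (e+e') (f+f') := by
  apply Md.ext <;> simp

set_option maxHeartbeats 1000000 in
lemma gen_of_good {p : ℕ} [hp : Fact p.Prime] (q1 q2 q3 q4 : Md p)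
    (h1A : q1.A ≠ 0) (h2A : q2.A = 0) (h3A : q3.A = 0)
    (h4A : q4.A = 0) (h4B : q4.B = 0) (h4C : q4.C = 0) (h4D : q4.D ≠ 0)
    (hdet : q2.B*q3.C - q2.C*q3.B ≠ 0) :
    Subgroup.closure ({q1,q2,q3,q4} : Set (Md p)) = ⊤ := by
  haveI : NeZero p := ⟨hp.1.ne_zero⟩
  set H := Subgroup.closure ({q1,q2,q3,q4} : Set (Md p)) with hH
  have m1 : q1 ∈ H := Subgroup.subset_closure (by simp)
  have m2 : q2 ∈ H := Subgroup.subset_closure (by simp)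
  have m3 : q3 ∈ H := Subgroup.subset_closure (by simp)
  have m4 : q4 ∈ H := Subgroup.subset_closure (by simp)
  have hg2 : gc q2 q1 ∈ H := by
    unfold gc
    exact mul_mem (mul_mem (mul_mem (inv_mem m2) (inv_mem m1)) m2) m1
  have hg3 : gc q3 q1 ∈ H := by
    unfold gc
    exact mul_mem (mul_mem (mul_mem (inv_mem m3) (inv_mem m1)) m3) m1
  have hg2v : gc q2 q1 = Md.mk' 0 0 0 0 (q2.B*q1.A) (q2.C*q1.A) := by
    rw [Md.gc_eval]; apply Md.ext <;> simp [h2A]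
  have hg3v : gc q3 q1 = Md.mk' 0 0 0 0 (q3.B*q1.A) (q3.C*q1.A) := by
    rw [Md.gc_eval]; apply Md.ext <;> simp [h3A]
  have hef : ∀ e f : ZMod p, Md.mk' 0 0 0 0 e f ∈ H := by
    intro e f
    set mm : ZMod p := (e*q3.C - f*q3.B)/(q1.A*(q2.B*q3.C - q2.C*q3.B)) with hmm
    set nn : ZMod p := (f*q2.B - e*q2.C)/(q1.A*(q2.B*q3.C - q2.C*q3.B)) with hnn
    have key : (gc q2 q1)^(mm.val) * (gc q3 q1)^(nn.val) = Md.mk' 0 0 0 0 e f := by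
      rw [hg2v, hg3v, Md.cen_pow, Md.cen_pow, Md.cen_mul]
      have hden : q1.A*(q2.B*q3.C - q2.C*q3.B) ≠ 0 := mul_ne_zero h1A hdet
      have hdet' : q3.C * q2.B - q3.B * q2.C ≠ 0 := by intro h0; apply hdet; linear_combination h0
      apply Md.ext <;> simp [ZMod.natCast_val, ZMod.cast_id]
      · rw [hmm, hnn]; field_simp; ring
      · rw [hmm, hnn]; field_simp; ring
    rw [← key]
    exact mul_mem (pow_mem hg2 _) (pow_mem hg3 _)
  rw [Subgroup.eq_top_iff']
  intro m
  have hden : q2.B*q3.C - q2.C*q3.B ≠ 0 := hdet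
  have hdet' : q3.C * q2.B - q3.B * q2.C ≠ 0 := by intro h0; apply hdet; linear_combination h0
  set i0 : ZMod p := m.A/q1.A with hi0
  set j0 : ZMod p := ((m.B - i0*q1.B)*q3.C - (m.C - i0*q1.C)*q3.B)/(q2.B*q3.C - q2.C*q3.B)
    with hj0
  set k0 : ZMod p := ((m.C - i0*q1.C)*q2.B - (m.B - i0*q1.B)*q2.C)/(q2.B*q3.C - q2.C*q3.B)
    with hk0
  set l0 : ZMod p := (m.D - i0*q1.D - j0*q2.D - k0*q3.D)/q4.D with hl0
  set w : Md p := q1^(i0.val) * q2^(j0.val) * q3^(k0.val) * q4^(l0.val) with hw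
  have hwH : w ∈ H :=
    mul_mem (mul_mem (mul_mem (pow_mem m1 _) (pow_mem m2 _)) (pow_mem m3 _)) (pow_mem m4 _)
  have hcast : ∀ z : ZMod p, ((z.val : ℕ) : ZMod p) = z := by
    intro z; simp [ZMod.natCast_val, ZMod.cast_id]
  have hwA : w.A = m.A := by
    rw [hw, Md.quadA, hcast, hcast, hcast, hcast, h2A, h3A, h4A, hi0]
    field_simp
    ring
  have hwB : w.B = m.B := by
    rw [hw, Md.quadB, hcast, hcast, hcast, hcast, h4B, hj0, hk0]
    field_simp
    ring
  have hwC : w.C = m.C := by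
    rw [hw, Md.quadC, hcast, hcast, hcast, hcast, h4C, hj0, hk0]
    field_simp
    ring
  have hwD : w.D = m.D := by
    rw [hw, Md.quadD, hcast, hcast, hcast, hcast, hl0]
    field_simp
    ring
  clear_value w
  have hcen : m * w⁻¹ = Md.mk' 0 0 0 0 ((m*w⁻¹).E) ((m*w⁻¹).F) := by
    apply Md.ext <;> simp [hwA, hwB, hwC, hwD]
  have hmw : m * w⁻¹ ∈ H := by rw [hcen]; exact hef _ _
  have := mul_mem hmw hwH
  simpa using this

lemma Md.gc_eqs {p : ℕ} {x y : Md p} (h : gc x y = 1) :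
    x.B*y.A - y.B*x.A = 0 ∧ x.C*y.A - y.C*x.A = 0 := by
  rw [Md.gc_eval] at h
  have hE := congrArg Md.E h
  have hF := congrArg Md.F h
  simp only [Md.E_mk, Md.F_mk, Md.E_one, Md.F_one] at hE hF
  exact ⟨hE, hF⟩

set_option maxHeartbeats 1000000 in
lemma good_of_rels {p : ℕ} [hp : Fact p.Prime] (q1 q2 q3 q4 : Md p)
    (r32 : gc q3 q2 = 1) (r41 : gc q4 q1 = 1) (r42 : gc q4 q2 = 1) (r43 : gc q4 q3 = 1)
    (hgen : Subgroup.closure ({q1,q2,q3,q4} : Set (Md p)) = ⊤) :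
    q1.A ≠ 0 ∧ q2.A = 0 ∧ q3.A = 0 ∧
      q4.A = 0 ∧ q4.B = 0 ∧ q4.C = 0 ∧ q4.D ≠ 0 ∧
      (q2.B*q3.C - q2.C*q3.B) ≠ 0 := by
  obtain ⟨e32B, e32C⟩ := Md.gc_eqs r32
  obtain ⟨e41B, e41C⟩ := Md.gc_eqs r41
  obtain ⟨e42B, e42C⟩ := Md.gc_eqs r42
  obtain ⟨e43B, e43C⟩ := Md.gc_eqs r43
  -- step 1: q4.A = q4.B = 0
  obtain ⟨h4B', h4A, -, -⟩ := htool q1 q2 q3 q4 hgen (-q4.B) (q4.A) 0 0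
    (by linear_combination -e41B) (by linear_combination -e42B)
    (by linear_combination -e43B) (by ring)
  have h4B : q4.B = 0 := by linear_combination -h4B'
  -- step 2: q4.C = 0
  obtain ⟨h4C', -, -, -⟩ := htool q1 q2 q3 q4 hgen (-q4.C) 0 (q4.A) 0
    (by linear_combination -e41C) (by linear_combination -e42C)
    (by linear_combination -e43C) (by ring)
  have h4C : q4.C = 0 := by linear_combination -h4C'
  -- step 3: q2.A = 0
  have h2A : q2.A = 0 := by
    by_contra h2A
    obtain ⟨hcr, hcs, hct, -⟩ := htool q1 q2 q3 q4 hgen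
      (q1.B*q2.C - q1.C*q2.B) (q1.C*q2.A - q1.A*q2.C) (q1.A*q2.B - q1.B*q2.A) 0
      (by ring) (by ring)
      (by
        have hmul : q2.A * ((q1.B*q2.C - q1.C*q2.B)*q3.A + (q1.C*q2.A - q1.A*q2.C)*q3.B +
            (q1.A*q2.B - q1.B*q2.A)*q3.C + 0*q3.D) = 0 := by
          linear_combination (q1.C*q2.A - q1.A*q2.C)*e32B + (q1.A*q2.B - q1.B*q2.A)*e32C
        exact (mul_eq_zero.mp hmul).resolve_left h2A)
      (by rw [h4A, h4B, h4C]; ring)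
    obtain ⟨-, h2A', -, -⟩ := htool q1 q2 q3 q4 hgen (-q2.B) (q2.A) 0 0
      (by linear_combination -hct) (by ring)
      (by linear_combination e32B) (by rw [h4A, h4B]; ring)
    exact h2A h2A'
  -- step 4: q3.A = 0
  have h3A : q3.A = 0 := by
    by_contra h3A
    obtain ⟨hcr, hcs, hct, -⟩ := htool q1 q2 q3 q4 hgen
      (q1.B*q3.C - q1.C*q3.B) (q1.C*q3.A - q1.A*q3.C) (q1.A*q3.B - q1.B*q3.A) 0
      (by ring)
      (by
        have hmul : q3.A * ((q1.B*q3.C - q1.C*q3.B)*q2.A + (q1.C*q3.A - q1.A*q3.C)*q2.B +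
            (q1.A*q3.B - q1.B*q3.A)*q2.C + 0*q2.D) = 0 := by
          linear_combination (-(q1.C*q3.A - q1.A*q3.C))*e32B + (-(q1.A*q3.B - q1.B*q3.A))*e32C
        exact (mul_eq_zero.mp hmul).resolve_left h3A)
      (by ring)
      (by rw [h4A, h4B, h4C]; ring)
    obtain ⟨-, h3A', -, -⟩ := htool q1 q2 q3 q4 hgen (-q3.B) (q3.A) 0 0
      (by linear_combination -hct) (by linear_combination -e32B)
      (by ring) (by rw [h4A, h4B]; ring)
    exact h3A h3A'
  -- step 5: q1.A ≠ 0
  have h1A : q1.A ≠ 0 := by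
    intro h1A
    obtain ⟨h10, -, -, -⟩ := htool q1 q2 q3 q4 hgen 1 0 0 0
      (by rw [h1A]; ring) (by rw [h2A]; ring) (by rw [h3A]; ring) (by rw [h4A]; ring)
    exact one_ne_zero h10
  -- step 6: det ≠ 0
  have hdet : (q2.B*q3.C - q2.C*q3.B) ≠ 0 := by
    intro hd
    obtain ⟨-, h2B', h2C', -⟩ := htool q1 q2 q3 q4 hgen
      ((q2.C*q1.B - q2.B*q1.C)/q1.A) (-q2.C) (q2.B) 0
      (by field_simp; ring) (by rw [h2A]; ring)
      (by rw [h3A]; linear_combination hd) (by rw [h4A, h4B, h4C]; ring)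
    have h2B : q2.B = 0 := h2C'
    have h2C : q2.C = 0 := by linear_combination -h2B'
    obtain ⟨-, h3B', h3C', -⟩ := htool q1 q2 q3 q4 hgen
      ((q3.C*q1.B - q3.B*q1.C)/q1.A) (-q3.C) (q3.B) 0
      (by field_simp; ring) (by rw [h2A, h2B, h2C]; ring)
      (by rw [h3A]; ring) (by rw [h4A, h4B, h4C]; ring)
    have h3B : q3.B = 0 := h3C'
    obtain ⟨-, hone, -, -⟩ := htool q1 q2 q3 q4 hgen
      (-q1.B/q1.A) 1 0 0
      (by field_simp; ring) (by rw [h2A, h2B]; ring)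
      (by rw [h3A, h3B]; ring) (by rw [h4A, h4B]; ring)
    exact one_ne_zero hone
  -- step 7: q4.D ≠ 0
  have h4D : q4.D ≠ 0 := by
    intro h4D0
    obtain ⟨-, -, -, hu⟩ := htool q1 q2 q3 q4 hgen
      (-((q2.C*q3.D - q2.D*q3.C)*q1.B + (q2.D*q3.B - q2.B*q3.D)*q1.C +
        (q2.B*q3.C - q2.C*q3.B)*q1.D)/q1.A)
      (q2.C*q3.D - q2.D*q3.C) (q2.D*q3.B - q2.B*q3.D) (q2.B*q3.C - q2.C*q3.B)
      (by field_simp; ring) (by rw [h2A]; ring)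
      (by rw [h3A]; ring) (by rw [h4A, h4B, h4C, h4D0]; ring)
    exact hdet hu
  exact ⟨h1A, h2A, h3A, h4A, h4B, h4C, h4D, hdet⟩

/-! ### automorphisms as quadruples -/

lemma base_gen [hp : Fact p.Prime] :
    Subgroup.closure ({gA p, gB p, gC p, gD p} : Set (Md p)) = ⊤ := by
  apply gen_of_good <;> simp [gA, gB, gC, gD]

lemma hom_ext [hp : Fact p.Prime] (f g : Md p →* Md p)
    (h1 : f (gA p) = g (gA p)) (h2 : f (gB p) = g (gB p))
    (h3 : f (gC p) = g (gC p)) (h4 : f (gD p) = g (gD p)) : f = g := by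
  have heq : Set.EqOn f g ({gA p, gB p, gC p, gD p} : Set (Md p)) := by
    intro x hx
    rcases hx with rfl | rfl | rfl | rfl <;> assumption
  have h := MonoidHom.eqOn_closure heq
  apply MonoidHom.ext
  intro m
  exact h (by rw [base_gen]; trivial)

def Rels (q : Md p × Md p × Md p × Md p) : Prop :=
  gc q.2.2.1 q.2.1 = 1 ∧ gc q.2.2.2 q.1 = 1 ∧ gc q.2.2.2 q.2.1 = 1 ∧ gc q.2.2.2 q.2.2.1 = 1

def Gens (q : Md p × Md p × Md p × Md p) : Prop :=
  Subgroup.closure ({q.1, q.2.1, q.2.2.1, q.2.2.2} : Set (Md p)) = ⊤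

def fq (q : Md p × Md p × Md p × Md p) : Fin 4 → Md p := fun i =>
  match i with
  | 0 => q.1
  | 1 => q.2.1
  | 2 => q.2.2.1
  | 3 => q.2.2.2

lemma hrelQ (hp : p.Prime) (h5 : 5 ≤ p) (q : Md p × Md p × Md p × Md p) (hq : Rels p q) :
    ∀ r ∈ classTwoRels p 4 R0, FreeGroup.lift (fq p q) r = 1 := by
  rintro r ((hR | ⟨w, rfl⟩) | ⟨u, v, w, rfl⟩)
  · simp only [R0, Set.mem_insert_iff, Set.mem_singleton_iff] at hR
    obtain ⟨hq1, hq2, hq3, hq4⟩ := hq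
    rcases hR with rfl | rfl | rfl | rfl <;>
      · rw [fgComm_eq_gc, map_gc]
        simp only [FreeGroup.lift_apply_of]
        first
          | exact hq1 | exact hq2 | exact hq3 | exact hq4
  · rw [map_pow]
    exact Md.exp_p hp h5 _
  · rw [fgComm_eq_gc, fgComm_eq_gc, map_gc, map_gc]
    exact Md.gc_gc p _ _ _

noncomputable def endoQ (hp : p.Prime) (h5 : 5 ≤ p) (q : Md p × Md p × Md p × Md p)
    (hq : Rels p q) : Md p →* Md p :=
  (PresentedGroup.toGroup (hrelQ p hp h5 q hq)).comp (theta p hp h5).symm.toMonoidHom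

lemma theta_pA (hp : p.Prime) (h5 : 5 ≤ p) : theta p hp h5 (pA p) = gA p := phi_of p hp h5 0
lemma theta_pB (hp : p.Prime) (h5 : 5 ≤ p) : theta p hp h5 (pB p) = gB p := phi_of p hp h5 1
lemma theta_pC (hp : p.Prime) (h5 : 5 ≤ p) : theta p hp h5 (pC p) = gC p := phi_of p hp h5 2
lemma theta_pD (hp : p.Prime) (h5 : 5 ≤ p) : theta p hp h5 (pD p) = gD p := phi_of p hp h5 3

lemma endoQ_gA (hp : p.Prime) (h5 : 5 ≤ p) (q : Md p × Md p × Md p × Md p)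
    (hq : Rels p q) : endoQ p hp h5 q hq (gA p) = q.1 := by
  have h : (theta p hp h5).symm (gA p) = pA p :=
    (MulEquiv.symm_apply_eq _).mpr (theta_pA p hp h5).symm
  show (PresentedGroup.toGroup (hrelQ p hp h5 q hq)) ((theta p hp h5).symm (gA p)) = q.1
  rw [h]
  exact PresentedGroup.toGroup.of _

lemma endoQ_gB (hp : p.Prime) (h5 : 5 ≤ p) (q : Md p × Md p × Md p × Md p)
    (hq : Rels p q) : endoQ p hp h5 q hq (gB p) = q.2.1 := by
  have h : (theta p hp h5).symm (gB p) = pB p :=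
    (MulEquiv.symm_apply_eq _).mpr (theta_pB p hp h5).symm
  show (PresentedGroup.toGroup (hrelQ p hp h5 q hq)) ((theta p hp h5).symm (gB p)) = q.2.1
  rw [h]
  exact PresentedGroup.toGroup.of _

lemma endoQ_gC (hp : p.Prime) (h5 : 5 ≤ p) (q : Md p × Md p × Md p × Md p)
    (hq : Rels p q) : endoQ p hp h5 q hq (gC p) = q.2.2.1 := by
  have h : (theta p hp h5).symm (gC p) = pC p :=
    (MulEquiv.symm_apply_eq _).mpr (theta_pC p hp h5).symm
  show (PresentedGroup.toGroup (hrelQ p hp h5 q hq)) ((theta p hp h5).symm (gC p)) = q.2.2.1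
  rw [h]
  exact PresentedGroup.toGroup.of _

lemma endoQ_gD (hp : p.Prime) (h5 : 5 ≤ p) (q : Md p × Md p × Md p × Md p)
    (hq : Rels p q) : endoQ p hp h5 q hq (gD p) = q.2.2.2 := by
  have h : (theta p hp h5).symm (gD p) = pD p :=
    (MulEquiv.symm_apply_eq _).mpr (theta_pD p hp h5).symm
  show (PresentedGroup.toGroup (hrelQ p hp h5 q hq)) ((theta p hp h5).symm (gD p)) = q.2.2.2
  rw [h]
  exact PresentedGroup.toGroup.of _

lemma endoQ_bij (hp : p.Prime) (h5 : 5 ≤ p) (q : Md p × Md p × Md p × Md p)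
    (hq : Rels p q) (hg : Gens p q) : Function.Bijective (endoQ p hp h5 q hq) := by
  haveI : Fact p.Prime := ⟨hp⟩
  have hsurj : Function.Surjective (endoQ p hp h5 q hq) := by
    rw [← MonoidHom.range_eq_top]
    rw [eq_top_iff, ← hg]
    apply Subgroup.closure_le _ |>.mpr
    intro x hx
    rcases hx with rfl | rfl | rfl | rfl
    · exact ⟨gA p, endoQ_gA p hp h5 q hq⟩
    · exact ⟨gB p, endoQ_gB p hp h5 q hq⟩
    · exact ⟨gC p, endoQ_gC p hp h5 q hq⟩
    · exact ⟨gD p, endoQ_gD p hp h5 q hq⟩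
  exact ⟨Finite.injective_iff_surjective.mpr hsurj, hsurj⟩

lemma base_rels [hp : Fact p.Prime] : Rels p (gA p, gB p, gC p, gD p) := by
  refine ⟨?_, ?_, ?_, ?_⟩ <;>
    · rw [Md.gc_eval]
      apply Md.ext <;> simp [gA, gB, gC, gD]

lemma images_rels (hp : p.Prime) (f : MulAut (Md p)) :
    Rels p (f (gA p), f (gB p), f (gC p), f (gD p)) := by
  haveI : Fact p.Prime := ⟨hp⟩
  obtain ⟨h1, h2, h3, h4⟩ := base_rels p
  refine ⟨?_, ?_, ?_, ?_⟩ <;>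
    · show gc (f _) (f _) = 1
      rw [← map_gc f]
      first
        | (rw [show gc (gC p) (gB p) = 1 from h1]; exact map_one _)
        | (rw [show gc (gD p) (gA p) = 1 from h2]; exact map_one _)
        | (rw [show gc (gD p) (gB p) = 1 from h3]; exact map_one _)
        | (rw [show gc (gD p) (gC p) = 1 from h4]; exact map_one _)

lemma images_gens (hp : p.Prime) (f : MulAut (Md p)) :
    Gens p (f (gA p), f (gB p), f (gC p), f (gD p)) := by
  haveI : Fact p.Prime := ⟨hp⟩
  show Subgroup.closure _ = ⊤
  have himg : ({f (gA p), f (gB p), f (gC p), f (gD p)} : Set (Md p)) =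
      f.toMonoidHom '' {gA p, gB p, gC p, gD p} := by
    simp [Set.image_insert_eq]
  rw [himg, ← MonoidHom.map_closure, base_gen]
  exact Subgroup.map_top_of_surjective _ f.surjective

noncomputable def autEquiv (hp : p.Prime) (h5 : 5 ≤ p) :
    MulAut (Md p) ≃ {q : Md p × Md p × Md p × Md p // Rels p q ∧ Gens p q} where
  toFun f := ⟨(f (gA p), f (gB p), f (gC p), f (gD p)),
    images_rels p hp f, images_gens p hp f⟩
  invFun q := MulEquiv.ofBijective _ (endoQ_bij p hp h5 q.1 q.2.1 q.2.2)
  left_inv f := by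
    haveI : Fact p.Prime := ⟨hp⟩
    refine MulEquiv.ext fun m => ?_
    show endoQ p hp h5 (f (gA p), f (gB p), f (gC p), f (gD p)) (images_rels p hp f) m = f m
    exact DFunLike.congr_fun
      (hom_ext p _ f.toMonoidHom (endoQ_gA p hp h5 _ _) (endoQ_gB p hp h5 _ _)
        (endoQ_gC p hp h5 _ _) (endoQ_gD p hp h5 _ _)) m
  right_inv q := by
    haveI : Fact p.Prime := ⟨hp⟩
    obtain ⟨⟨x1, x2, x3, x4⟩, hq⟩ := q
    refine Subtype.ext ?_
    show (endoQ p hp h5 (x1,x2,x3,x4) hq.1 (gA p), endoQ p hp h5 (x1,x2,x3,x4) hq.1 (gB p),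
      endoQ p hp h5 (x1,x2,x3,x4) hq.1 (gC p), endoQ p hp h5 (x1,x2,x3,x4) hq.1 (gD p))
      = (x1,x2,x3,x4)
    rw [endoQ_gA p hp h5 _ hq.1, endoQ_gB p hp h5 _ hq.1, endoQ_gC p hp h5 _ hq.1,
      endoQ_gD p hp h5 _ hq.1]

/-! ### counting the good quadruples -/

def Good (q : Md p × Md p × Md p × Md p) : Prop :=
  q.1.A ≠ 0 ∧ q.2.1.A = 0 ∧ q.2.2.1.A = 0 ∧
    q.2.2.2.A = 0 ∧ q.2.2.2.B = 0 ∧ q.2.2.2.C = 0 ∧ q.2.2.2.D ≠ 0 ∧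
    (q.2.1.B*q.2.2.1.C - q.2.1.C*q.2.2.1.B) ≠ 0

lemma relsGens_iff_good [hp : Fact p.Prime] (q : Md p × Md p × Md p × Md p) :
    (Rels p q ∧ Gens p q) ↔ Good p q := by
  constructor
  · rintro ⟨⟨h1, h2, h3, h4⟩, hg⟩
    exact good_of_rels q.1 q.2.1 q.2.2.1 q.2.2.2 h1 h2 h3 h4 hg
  · rintro ⟨h1, h2, h3, h4, h5, h6, h7, h8⟩
    constructor
    · refine ⟨?_, ?_, ?_, ?_⟩ <;>
        · rw [Md.gc_eval]
          apply Md.ext <;> simp [h2, h3, h4, h5, h6]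
    · exact gen_of_good q.1 q.2.1 q.2.2.1 q.2.2.2 h1 h2 h3 h4 h5 h6 h7 h8

def goodEquiv : {q : Md p × Md p × Md p × Md p // Good p q} ≃
    ({a : ZMod p // a ≠ 0} × (ZMod p × ZMod p × ZMod p × ZMod p × ZMod p) ×
     {v : (ZMod p × ZMod p) × (ZMod p × ZMod p) // v.1.1*v.2.2 - v.1.2*v.2.1 ≠ 0} ×
     (ZMod p × ZMod p × ZMod p) × (ZMod p × ZMod p × ZMod p) ×
     {a : ZMod p // a ≠ 0} × (ZMod p × ZMod p)) where
  toFun := fun ⟨(q1,q2,q3,q4), hg⟩ =>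
    (⟨q1.A, hg.1⟩, (q1.B, q1.C, q1.D, q1.E, q1.F),
     ⟨((q2.B, q2.C), (q3.B, q3.C)), hg.2.2.2.2.2.2.2⟩,
     (q2.D, q2.E, q2.F), (q3.D, q3.E, q3.F),
     ⟨q4.D, hg.2.2.2.2.2.2.1⟩, (q4.E, q4.F))
  invFun := fun ⟨⟨a1, ha1⟩, (b1,c1,d1,e1,f1), ⟨((b2,c2),(b3,c3)), hv⟩,
      (d2,e2,f2), (d3,e3,f3), ⟨d4, hd4⟩, (e4,f4)⟩ =>
    ⟨(Md.mk' a1 b1 c1 d1 e1 f1, Md.mk' 0 b2 c2 d2 e2 f2, Md.mk' 0 b3 c3 d3 e3 f3,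
      Md.mk' 0 0 0 d4 e4 f4),
     by simpa using ha1, by simp, by simp, by simp, by simp, by simp,
     by simpa using hd4, by simpa using hv⟩
  left_inv := by
    rintro ⟨⟨q1,q2,q3,q4⟩, h1, h2, h3, h4, h5, h6, h7, h8⟩
    refine Subtype.ext ?_
    simp only [Prod.mk.injEq]
    refine ⟨?_, ?_, ?_, ?_⟩ <;> (apply Md.ext <;> simp [h2, h3, h4, h5, h6])
  right_inv := by
    rintro ⟨⟨a1,ha1⟩, ⟨b1,c1,d1,e1,f1⟩, ⟨⟨⟨b2,c2⟩,⟨b3,c3⟩⟩, hv⟩,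
      ⟨d2,e2,f2⟩, ⟨d3,e3,f3⟩, ⟨d4,hd4⟩, ⟨e4,f4⟩⟩
    rfl

lemma card_line [hp : Fact p.Prime] (a b : ZMod p) (h : ¬(a = 0 ∧ b = 0)) :
    Fintype.card {v : ZMod p × ZMod p // a*v.2 - b*v.1 = 0} = p := by
  haveI : NeZero p := ⟨hp.1.ne_zero⟩
  by_cases ha : a = 0
  · have hb : b ≠ 0 := fun hb => h ⟨ha, hb⟩
    have e : {v : ZMod p × ZMod p // a*v.2 - b*v.1 = 0} ≃ ZMod p :=
      { toFun := fun v => v.1.2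
        invFun := fun t => ⟨(0, t), by simp [ha]⟩
        left_inv := by
          rintro ⟨⟨v1, v2⟩, hvv⟩
          refine Subtype.ext ?_
          simp only [Prod.mk.injEq]
          refine ⟨?_, trivial⟩
          rw [ha] at hvv
          simp at hvv
          rcases hvv with hvv | hvv
          · exact absurd hvv hb
          · exact hvv.symm
        right_inv := fun t => rfl }
    rw [Fintype.card_congr e, ZMod.card]
  · have e : {v : ZMod p × ZMod p // a*v.2 - b*v.1 = 0} ≃ ZMod p :=
      { toFun := fun v => v.1.1
        invFun := fun t => ⟨(t, b*t/a), by field_simp; ring⟩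
        left_inv := by
          rintro ⟨⟨v1, v2⟩, hvv⟩
          refine Subtype.ext ?_
          simp only [Prod.mk.injEq]
          refine ⟨trivial, ?_⟩
          simp only at hvv
          field_simp
          linear_combination -hvv
        right_inv := fun t => rfl }
    rw [Fintype.card_congr e, ZMod.card]

lemma card_fiber [hp : Fact p.Prime] (u : ZMod p × ZMod p) (h : u ≠ 0) :
    Fintype.card {v : ZMod p × ZMod p // u.1*v.2 - u.2*v.1 ≠ 0} = p^2 - p := by
  haveI : NeZero p := ⟨hp.1.ne_zero⟩
  have hcompl := Fintype.card_subtype_compl (fun v : ZMod p × ZMod p => u.1*v.2 - u.2*v.1 = 0)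
  have hline : Fintype.card {v : ZMod p × ZMod p // u.1*v.2 - u.2*v.1 = 0} = p := by
    apply card_line
    rintro ⟨h1, h2⟩
    exact h (Prod.ext h1 h2)
  rw [hcompl, hline]
  congr 1
  rw [Fintype.card_prod, ZMod.card]
  ring

lemma cardDet [hp : Fact p.Prime] :
    Nat.card {v : (ZMod p × ZMod p) × (ZMod p × ZMod p) // v.1.1*v.2.2 - v.1.2*v.2.1 ≠ 0}
      = (p^2-1)*(p^2-p) := by
  haveI : NeZero p := ⟨hp.1.ne_zero⟩
  rw [Nat.card_eq_fintype_card]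
  rw [Fintype.card_congr (Equiv.subtypeProdEquivSigmaSubtype
    (fun u v : ZMod p × ZMod p => u.1*v.2 - u.2*v.1 ≠ 0))]
  rw [Fintype.card_sigma]
  have hterm : ∀ u : ZMod p × ZMod p,
      Fintype.card {v : ZMod p × ZMod p // u.1*v.2 - u.2*v.1 ≠ 0}
        = if u = 0 then 0 else p^2 - p := by
    intro u
    split_ifs with h0
    · subst h0
      haveI : IsEmpty {v : ZMod p × ZMod p //
          (0 : ZMod p × ZMod p).1*v.2 - (0 : ZMod p × ZMod p).2*v.1 ≠ 0} :=
        ⟨fun v => v.2 (by simp)⟩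
      exact Fintype.card_eq_zero
    · exact card_fiber p u h0
  rw [Finset.sum_congr rfl (fun u _ => hterm u)]
  rw [Finset.sum_ite, Finset.sum_const, Finset.sum_const]
  have hcard2 : Fintype.card (ZMod p × ZMod p) = p^2 := by
    rw [Fintype.card_prod, ZMod.card]; ring
  have hfilter : (Finset.univ.filter (fun u : ZMod p × ZMod p => ¬ u = 0)).card = p^2 - 1 := by
    rw [Finset.filter_not, Finset.card_sdiff_of_subset (Finset.filter_subset _ _),
      Finset.filter_eq']
    simp [hcard2]
  rw [hfilter]
  simp [smul_eq_mul]

lemma card_aut_Md (hp : p.Prime) (h5 : 5 ≤ p) :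
    Nat.card (MulAut (Md p)) = (p-1)^2 * (p^2-1) * (p^2-p) * p^13 := by
  haveI : Fact p.Prime := ⟨hp⟩
  haveI : NeZero p := ⟨hp.ne_zero⟩
  rw [Nat.card_congr (autEquiv p hp h5)]
  rw [Nat.card_congr (Equiv.subtypeEquivRight (relsGens_iff_good p))]
  rw [Nat.card_congr (goodEquiv p)]
  have h1 : Nat.card {a : ZMod p // a ≠ 0} = p - 1 := by
    rw [Nat.card_eq_fintype_card, Md.card_ne_zero_zmod]
  simp only [Nat.card_prod, h1, Nat.card_zmod, cardDet p]
  ring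

def conjEquivG {G H : Type*} [Group G] [Group H] (e : G ≃* H) :
    ConjClasses G ≃ ConjClasses H :=
  Quotient.congr e.toEquiv (by
    intro a b
    show IsConj a b ↔ IsConj (e a) (e b)
    constructor
    · rw [isConj_iff, isConj_iff]
      rintro ⟨c, rfl⟩; exact ⟨e c, by simp [map_mul]⟩
    · rw [isConj_iff, isConj_iff]
      rintro ⟨c, hc⟩
      refine ⟨e.symm c, ?_⟩
      apply e.injective
      simp [map_mul, hc])

def mulAutEquivG {G H : Type*} [Group G] [Group H] (e : G ≃* H) : MulAut G ≃ MulAut H :=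
  ⟨fun f => (e.symm.trans f).trans e, fun g => (e.trans g).trans e.symm,
   fun f => by ext x; simp, fun g => by ext x; simp⟩

theorem group_6_4_1 (p : ℕ) (hp : p.Prime) (h5 : 5 ≤ p) :
    Nat.card (ConjClasses (ClassTwoGroup p 4 ({fgComm (FreeGroup.of (2 : Fin 4)) (FreeGroup.of (1 : Fin 4)), fgComm (FreeGroup.of (3 : Fin 4)) (FreeGroup.of (0 : Fin 4)), fgComm (FreeGroup.of (3 : Fin 4)) (FreeGroup.of (1 : Fin 4)), fgComm (FreeGroup.of (3 : Fin 4)) (FreeGroup.of (2 : Fin 4))} : Set (FreeGroup (Fin 4))))) = 2 * p ^ 4 - p ^ 2 ∧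
    Nat.card (MulAut (ClassTwoGroup p 4 ({fgComm (FreeGroup.of (2 : Fin 4)) (FreeGroup.of (1 : Fin 4)), fgComm (FreeGroup.of (3 : Fin 4)) (FreeGroup.of (0 : Fin 4)), fgComm (FreeGroup.of (3 : Fin 4)) (FreeGroup.of (1 : Fin 4)), fgComm (FreeGroup.of (3 : Fin 4)) (FreeGroup.of (2 : Fin 4))} : Set (FreeGroup (Fin 4))))) = (p - 1) ^ 2 * (p ^ 2 - 1) * (p ^ 2 - p) * p ^ 13 := by
  haveI : Fact p.Prime := ⟨hp⟩
  have e0 : ClassTwoGroup p 4 ({fgComm (FreeGroup.of (2 : Fin 4)) (FreeGroup.of (1 : Fin 4)), fgComm (FreeGroup.of (3 : Fin 4)) (FreeGroup.of (0 : Fin 4)), fgComm (FreeGroup.of (3 : Fin 4)) (FreeGroup.of (1 : Fin 4)), fgComm (FreeGroup.of (3 : Fin 4)) (FreeGroup.of (2 : Fin 4))} : Set (FreeGroup (Fin 4)))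
      ≃* PP p := MulEquiv.refl _
  have θ' := e0.trans (theta p hp h5)
  constructor
  · rw [Nat.card_congr (conjEquivG θ')]
    exact Md.card_conjClasses
  · rw [Nat.card_congr (mulAutEquivG θ')]
    exact card_aut_Md p hp h5
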